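/- arXiv:1203.0403 — 6 statements merged into one kernel-verified Lean document; each statement's English description precedes it below -/
import Mathlib

section
/- Let H be a real Hilbert space and H₁, …, H_d (d ≥ 1) closed subspaces of H such that (i) for all j ≠ k the operator from H_k to H sending f to Π_j f (the orthogonal projection of f onto H_j) is a compact operator, and (ii) whenever f_j ∈ H_j for each j and f₁ + ⋯ + f_d = 0, then f_j = 0 for all j. Then the subspace V = H₁ + ⋯ + H_d is closed in H and there exists a constant γ ∈ [0,1) such that ‖Q_d Q_{d−1} ⋯ Q_1 f‖ ≤ γ ‖f‖ for every f ∈ V. -/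
open Filter Topology Finset
open scoped RealInnerProductSpace

lemma aux_sq_le {a b : ℝ} (ha : 0 ≤ a) (hb : 0 ≤ b) (h : a ^ 2 ≤ b ^ 2) : a ≤ b := by
  nlinarith [sq_nonneg (a - b), sq_nonneg (a + b)]

section aux

variable {H : Type*} [NormedAddCommGroup H] [InnerProductSpace ℝ H]

lemma aux_prod_cons (A : H →L[ℝ] H) (l : List (H →L[ℝ] H)) (x : H) :
    ((A :: l).reverse.prod) x = l.reverse.prod (A x) := by
  simp [List.reverse_cons, List.prod_append, ContinuousLinearMap.mul_apply]

lemma aux_N1 (l : List (H →L[ℝ] H)) (h : ∀ A ∈ l, ∀ x : H, ‖A x‖ ≤ ‖x‖) (x : H) :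
    ‖l.reverse.prod x‖ ≤ ‖x‖ := by
  induction l generalizing x with
  | nil => simp
  | cons A l ih =>
      rw [aux_prod_cons]
      exact (ih (fun B hB => h B (List.mem_cons_of_mem _ hB)) (A x)).trans
        (h A List.mem_cons_self x)

lemma aux_N2 {d : ℕ} (P : Fin d → (H →L[ℝ] H))
    (hPle : ∀ j (x : H), ‖P j x‖ ≤ ‖x‖)
    (hPyth : ∀ j (x : H), ‖x - P j x‖ ^ 2 = ‖x‖ ^ 2 - ‖P j x‖ ^ 2) :
    ∀ (l : List (Fin d)) (x : H) (j : Fin d), j ∈ l →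
      ‖P j x‖ ^ 2 ≤ 4 ^ l.length *
        (‖x‖ ^ 2 - ‖((l.map fun i => (1 : H →L[ℝ] H) - P i).reverse.prod) x‖ ^ 2) := by
  have hone : ∀ (i : Fin d) (y : H), ((1 : H →L[ℝ] H) - P i) y = y - P i y := fun i y => rfl
  have hQle : ∀ (i : Fin d) (y : H), ‖y - P i y‖ ≤ ‖y‖ := fun i y =>
    aux_sq_le (norm_nonneg _) (norm_nonneg _)
      (by nlinarith [hPyth i y, sq_nonneg ‖P i y‖])
  have hmemle : ∀ (l : List (Fin d)),
      ∀ A ∈ l.map fun i => (1 : H →L[ℝ] H) - P i, ∀ y : H, ‖A y‖ ≤ ‖y‖ := by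
    intro l A hA y
    obtain ⟨i, _, rfl⟩ := List.mem_map.mp hA
    rw [hone]; exact hQle i y
  intro l
  induction l with
  | nil => intro x j hj; exact absurd hj List.not_mem_nil
  | cons j₀ l ih =>
    intro x j hj
    have hcons : (((j₀ :: l).map fun i => (1 : H →L[ℝ] H) - P i).reverse.prod) x
        = ((l.map fun i => (1 : H →L[ℝ] H) - P i).reverse.prod) (x - P j₀ x) := by
      rw [List.map_cons, aux_prod_cons, hone]
    have hN1 : ‖((l.map fun i => (1 : H →L[ℝ] H) - P i).reverse.prod) (x - P j₀ x)‖
        ≤ ‖x - P j₀ x‖ := aux_N1 _ (hmemle l) _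
    have hbr0 : 0 ≤ ‖x‖ ^ 2 - ‖(((j₀ :: l).map fun i => (1 : H →L[ℝ] H) - P i).reverse.prod) x‖ ^ 2 := by
      have := aux_N1 _ (hmemle (j₀ :: l)) x
      nlinarith [norm_nonneg ((((j₀ :: l).map fun i => (1 : H →L[ℝ] H) - P i).reverse.prod) x), norm_nonneg x]
    have hpow1 : (1 : ℝ) ≤ 4 ^ (j₀ :: l).length := one_le_pow₀ (by norm_num)
    rcases List.mem_cons.mp hj with rfl | hjl
    · -- j = j₀
      have h1 : ‖P j x‖ ^ 2 ≤ ‖x‖ ^ 2 - ‖(((j :: l).map fun i => (1 : H →L[ℝ] H) - P i).reverse.prod) x‖ ^ 2 := by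
        rw [hcons]
        nlinarith [hPyth j x, hN1, norm_nonneg (x - P j x),
          norm_nonneg (((l.map fun i => (1 : H →L[ℝ] H) - P i).reverse.prod) (x - P j x))]
      nlinarith [hbr0]
    · -- j ∈ l
      have hih := ih (x - P j₀ x) j hjl
      have htri : ‖P j x‖ ≤ ‖P j (x - P j₀ x)‖ + ‖P j₀ x‖ := by
        have h2 : P j x = P j (x - P j₀ x) + P j (P j₀ x) := by
          rw [← map_add]; congr 1; abel
        calc ‖P j x‖ = ‖P j (x - P j₀ x) + P j (P j₀ x)‖ := by rw [← h2]
          _ ≤ ‖P j (x - P j₀ x)‖ + ‖P j (P j₀ x)‖ := norm_add_le _ _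
          _ ≤ ‖P j (x - P j₀ x)‖ + ‖P j₀ x‖ := by gcongr; exact hPle j _
      have hy2 : ‖x - P j₀ x‖ ^ 2 = ‖x‖ ^ 2 - ‖P j₀ x‖ ^ 2 := hPyth j₀ x
      have hRlx : ‖((l.map fun i => (1 : H →L[ℝ] H) - P i).reverse.prod) (x - P j₀ x)‖
          = ‖(((j₀ :: l).map fun i => (1 : H →L[ℝ] H) - P i).reverse.prod) x‖ := by rw [hcons]
      rw [hRlx] at hih
      have hc2 : ‖P j₀ x‖ ^ 2 ≤ ‖x‖ ^ 2 - ‖(((j₀ :: l).map fun i => (1 : H →L[ℝ] H) - P i).reverse.prod) x‖ ^ 2 := by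
        rw [hcons]
        nlinarith [hPyth j₀ x, hN1, norm_nonneg (x - P j₀ x),
          norm_nonneg (((l.map fun i => (1 : H →L[ℝ] H) - P i).reverse.prod) (x - P j₀ x))]
      have hpown : (1 : ℝ) ≤ 4 ^ l.length := one_le_pow₀ (by norm_num)
      have hlen : ((j₀ :: l).length : ℕ) = l.length + 1 := rfl
      rw [hy2] at hih
      have h1 : ‖P j x‖ ^ 2 ≤ (‖P j (x - P j₀ x)‖ + ‖P j₀ x‖) ^ 2 :=
        pow_le_pow_left₀ (norm_nonneg _) htri 2
      have h3 : ‖P j₀ x‖ ^ 2 ≤ (4 : ℝ) ^ l.length * ‖P j₀ x‖ ^ 2 := by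
        nlinarith [sq_nonneg (‖P j₀ x‖)]
      have h5 : (0:ℝ) ≤ (4 : ℝ) ^ l.length *
          (‖x‖ ^ 2 - ‖(((j₀ :: l).map fun i => (1 : H →L[ℝ] H) - P i).reverse.prod) x‖ ^ 2) :=
        mul_nonneg (by positivity) hbr0
      have h6 : (4:ℝ) ^ (j₀ :: l).length = 4 * 4 ^ l.length := by rw [hlen]; ring
      rw [h6]
      nlinarith [sq_nonneg (‖P j (x - P j₀ x)‖ - ‖P j₀ x‖)]

end aux
set_option maxHeartbeats 1000000 in
/-- Let `H` be a real Hilbert space and `H₁, …, H_d` (`d ≥ 1`) closed subspaces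
of `H` such that (i) for all `j ≠ k` the operator from `H_k` to `H` sending `f` to `Π_j f`
(the orthogonal projection of `f` onto `H_j`) is a compact operator, and (ii) whenever
`f_j ∈ H_j` for each `j` and `f₁ + ⋯ + f_d = 0`, then `f_j = 0` for all `j`.  Then the
subspace `V = H₁ + ⋯ + H_d` is closed in `H` and there exists a constant `γ ∈ [0,1)` such
that `‖Q_d Q_{d−1} ⋯ Q_1 f‖ ≤ γ ‖f‖` for every `f ∈ V`, where `Q_j = I − Π_j`. -/
theorem closed_sum_and_norm_contraction_of_compact_projections
    (d : ℕ) (hd : 1 ≤ d)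
    (H : Type*) [NormedAddCommGroup H] [InnerProductSpace ℝ H] [CompleteSpace H]
    (Hsub : Fin d → Submodule ℝ H)
    (hclosed : ∀ j, IsClosed ((Hsub j : Set H)))
    (P : Fin d → (H →L[ℝ] H))
    (hP_mem : ∀ j x, P j x ∈ Hsub j)
    (hP_orth : ∀ j x, x - P j x ∈ (Hsub j)ᗮ)
    (hcompact : ∀ j k, j ≠ k → IsCompactOperator (fun f : Hsub k => P j (f : H)))
    (hindep : ∀ f : Fin d → H, (∀ j, f j ∈ Hsub j) → (∑ j, f j) = 0 → ∀ j, f j = 0) :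
    IsClosed (((⨆ j, Hsub j : Submodule ℝ H) : Set H)) ∧
    ∃ γ : ℝ, 0 ≤ γ ∧ γ < 1 ∧
      ∀ f ∈ (⨆ j, Hsub j : Submodule ℝ H),
        ‖((List.ofFn fun j : Fin d => (1 : H →L[ℝ] H) - P j).reverse.prod) f‖ ≤ γ * ‖f‖ := by
  classical
  haveI : ∀ j, CompleteSpace (Hsub j) := fun j => (hclosed j).completeSpace_coe
  -- basic projection facts
  have inner0 : ∀ (j) (x : H), (inner ℝ (P j x) (x - P j x) : ℝ) = 0 := fun j x =>
    Submodule.inner_right_of_mem_orthogonal (hP_mem j x) (hP_orth j x)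
  have hPyth : ∀ (j) (x : H), ‖x - P j x‖ ^ 2 = ‖x‖ ^ 2 - ‖P j x‖ ^ 2 := by
    intro j x
    have hx : P j x + (x - P j x) = x := by abel
    have h := norm_add_sq_real (P j x) (x - P j x)
    rw [hx, inner0 j x] at h
    linarith
  have hPle : ∀ (j) (x : H), ‖P j x‖ ≤ ‖x‖ := fun j x =>
    aux_sq_le (norm_nonneg _) (norm_nonneg _)
      (by nlinarith [hPyth j x, sq_nonneg ‖x - P j x‖])
  have hPeq : ∀ j, ∀ x ∈ Hsub j, P j x = x := by
    intro j x hx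
    have h1 : x - P j x ∈ Hsub j := sub_mem hx (hP_mem j x)
    have h2 := Submodule.inner_right_of_mem_orthogonal h1 (hP_orth j x)
    rw [real_inner_self_eq_norm_sq] at h2
    have h3 : x - P j x = 0 := by
      rw [← norm_eq_zero]
      nlinarith [norm_nonneg (x - P j x)]
    have := sub_eq_zero.mp h3
    exact this.symm
  -- the summation operator
  set T : (∀ j, Hsub j) →L[ℝ] H := LinearMap.mkContinuous
    { toFun := fun x => ∑ j, ((x j : H))
      map_add' := fun x y => by simp [Finset.sum_add_distrib]
      map_smul' := fun c x => by simp [Finset.smul_sum] }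
    d (fun x => by
      calc ‖∑ j, ((x j : H))‖ ≤ ∑ j, ‖(x j : H)‖ := norm_sum_le _ _
        _ ≤ ∑ _j : Fin d, ‖x‖ := Finset.sum_le_sum fun j _ => norm_le_pi_norm x j
        _ = d * ‖x‖ := by simp [Finset.sum_const, Finset.card_univ, nsmul_eq_mul]) with hTdef
  have hTapp : ∀ x, T x = ∑ j, ((x j : H)) := fun x => rfl
  -- fixed ultrafilter extending atTop
  obtain ⟨U, hU⟩ := Filter.exists_ultrafilter_le (atTop : Filter ℕ)
  -- the key limit construction
  have limC : ∀ (y : ℕ → ∀ j, Hsub j) (Rb : ℝ), (∀ n j, ‖y n j‖ ≤ Rb) →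
      (∀ k, Filter.Tendsto (fun n => P k (∑ j, ((y n j : H)))) Filter.atTop (nhds 0)) →
      ∃ g : ∀ j, Hsub j, Filter.Tendsto y (↑U) (nhds g) := by
    intro y Rb hbdd hPT
    have hw : ∀ k j : Fin d, ∃ w : H, k ≠ j →
        Filter.Tendsto (fun n => P k ((y n j : H))) (↑U) (nhds w) := by
      intro k j
      by_cases hkj : k ≠ j
      · have hco : IsCompactOperator
            ⇑((P k).toLinearMap.comp ((Hsub j).subtype)) := hcompact k j hkj
        have hK := hco.isCompact_closure_image_closedBall Rb
        have hmem : ∀ n, P k ((y n j : H)) ∈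
            closure (((P k).toLinearMap.comp ((Hsub j).subtype)) '' Metric.closedBall 0 Rb) :=
          fun n => subset_closure ⟨y n j, mem_closedBall_zero_iff.mpr (hbdd n j), rfl⟩
        obtain ⟨w, -, hwt⟩ := hK.ultrafilter_le_nhds
          (Ultrafilter.map (fun n => P k ((y n j : H))) U)
          (by rw [Ultrafilter.coe_map, Filter.le_principal_iff, Filter.mem_map]
              exact Filter.univ_mem' hmem)
        exact ⟨w, fun _ => hwt⟩
      · exact ⟨0, fun h => absurd h hkj⟩
    choose w hwt using hw
    have hten : ∀ k, Filter.Tendsto (fun n => ((y n k : H))) (↑U)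
        (nhds (0 - ∑ j ∈ Finset.univ.erase k, w k j)) := by
      intro k
      have h1 : ∀ n, ((y n k : H)) = P k (∑ j, ((y n j : H)))
          - ∑ j ∈ Finset.univ.erase k, P k ((y n j : H)) := by
        intro n
        have h2 : P k (∑ j, ((y n j : H))) = ∑ j, P k ((y n j : H)) := map_sum _ _ _
        rw [h2, ← Finset.add_sum_erase _ _ (Finset.mem_univ k), hPeq k _ (y n k).2]
        abel
      have h3 : Filter.Tendsto (fun n => P k (∑ j, ((y n j : H)))
          - ∑ j ∈ Finset.univ.erase k, P k ((y n j : H))) (↑U)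
          (nhds (0 - ∑ j ∈ Finset.univ.erase k, w k j)) :=
        ((hPT k).mono_left hU).sub
          (tendsto_finset_sum _ fun j hj => hwt k j (Finset.ne_of_mem_erase hj).symm)
      exact h3.congr (fun n => (h1 n).symm)
    have hmem2 : ∀ k, (0 - ∑ j ∈ Finset.univ.erase k, w k j) ∈ Hsub k := fun k =>
      (hclosed k).mem_of_tendsto (hten k) (Filter.Eventually.of_forall fun n => (y n k).2)
    refine ⟨fun k => ⟨_, hmem2 k⟩, tendsto_pi_nhds.mpr fun k => ?_⟩
    exact tendsto_subtype_rng.mpr (hten k)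
  -- Step 1 : coercivity of T
  have hcoer : ∃ c : ℝ, 0 < c ∧ ∀ x : ∀ j, Hsub j, c * ‖x‖ ≤ ‖T x‖ := by
    by_contra hcon
    push_neg at hcon
    have hseq : ∀ n : ℕ, ∃ y : ∀ j, Hsub j, ‖y‖ = 1 ∧ ‖T y‖ < 1 / (n + 1) := by
      intro n
      obtain ⟨x, hx⟩ := hcon (1 / (n + 1)) (by positivity)
      have hx0 : x ≠ 0 := by
        intro h
        rw [h] at hx
        simp at hx
      have hxn : 0 < ‖x‖ := norm_pos_iff.mpr hx0
      refine ⟨‖x‖⁻¹ • x, ?_, ?_⟩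
      · rw [norm_smul, norm_inv, norm_norm]
        field_simp
      · rw [map_smul, norm_smul, norm_inv, norm_norm]
        rw [inv_mul_lt_iff₀ hxn]
        calc ‖T x‖ < 1 / (↑n + 1) * ‖x‖ := hx
          _ = ‖x‖ * (1 / (↑n + 1)) := by ring
    choose y hy1 hy2 using hseq
    have hbdd : ∀ n j, ‖y n j‖ ≤ 1 := fun n j =>
      (norm_le_pi_norm (y n) j).trans (le_of_eq (hy1 n))
    have hTz : Filter.Tendsto (fun n => T (y n)) Filter.atTop (nhds 0) :=
      squeeze_zero_norm (fun n => (hy2 n).le) tendsto_one_div_add_atTop_nhds_zero_nat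
    have hPT : ∀ k, Filter.Tendsto (fun n => P k (∑ j, ((y n j : H))))
        Filter.atTop (nhds 0) := by
      intro k
      have h1 : Filter.Tendsto (fun n => P k (T (y n))) Filter.atTop (nhds (P k 0)) :=
        ((P k).continuous.tendsto 0).comp hTz
      simpa [hTapp] using h1
    obtain ⟨g, hg⟩ := limC y 1 hbdd hPT
    have hTg : T g = 0 :=
      tendsto_nhds_unique ((T.continuous.tendsto g).comp hg) (hTz.mono_left hU)
    have hg0 : g = 0 := by
      have h2 := hindep (fun k => ((g k : H))) (fun k => (g k).2) (by rw [← hTapp g]; exact hTg)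
      funext k
      exact Subtype.ext (h2 k)
    have hn1 : Filter.Tendsto (fun n => ‖y n‖) (↑U) (nhds ‖g‖) :=
      (continuous_norm.tendsto g).comp hg
    have hn2 : Filter.Tendsto (fun n => ‖y n‖) (↑U) (nhds 1) := by
      simp only [hy1]
      exact tendsto_const_nhds
    have : ‖g‖ = 1 := tendsto_nhds_unique hn1 hn2
    rw [hg0] at this
    simp at this
  obtain ⟨c, hc, hcb⟩ := hcoer
  -- the range of T is the sup
  have hrange : (((⨆ j, Hsub j : Submodule ℝ H)) : Set H) = Set.range T := by
    apply Set.Subset.antisymm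
    · intro f hf
      rw [SetLike.mem_coe] at hf
      refine Submodule.iSup_induction (motive := fun f => f ∈ Set.range T) _ hf ?_ ?_ ?_
      · intro j f hfj
        refine ⟨Pi.single j ⟨f, hfj⟩, ?_⟩
        rw [hTapp]
        rw [Finset.sum_eq_single j]
        · simp
        · intro k _ hk
          rw [Pi.single_eq_of_ne hk]
          simp
        · intro h; exact absurd (Finset.mem_univ j) h
      · exact ⟨0, by rw [hTapp]; simp⟩
      · rintro a b ⟨xa, rfl⟩ ⟨xb, rfl⟩
        exact ⟨xa + xb, map_add T xa xb⟩
    · rintro f ⟨x, rfl⟩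
      rw [SetLike.mem_coe, hTapp]
      exact Submodule.sum_mem _ fun j _ => Submodule.mem_iSup_of_mem j (x j).2
  have hVclosed : IsClosed (((⨆ j, Hsub j : Submodule ℝ H)) : Set H) := by
    rw [hrange]
    have hanti : AntilipschitzWith (⟨c, hc.le⟩ : NNReal)⁻¹ T := by
      apply ContinuousLinearMap.antilipschitz_of_bound
      intro x
      have := hcb x
      show ‖x‖ ≤ c⁻¹ * ‖T x‖
      rw [le_inv_mul_iff₀ (by exact_mod_cast hc)]
      exact_mod_cast this
    exact hanti.isClosed_range T.uniformContinuous
  refine ⟨hVclosed, ?_⟩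
  set Q : H →L[ℝ] H := (List.ofFn fun j : Fin d => (1 : H →L[ℝ] H) - P j).reverse.prod with hQdef
  have hQmap : Q = ((List.finRange d).map fun j => (1 : H →L[ℝ] H) - P j).reverse.prod := by
    rw [hQdef, List.ofFn_eq_map]
  have hmemle : ∀ A ∈ (List.finRange d).map fun i => (1 : H →L[ℝ] H) - P i,
      ∀ y : H, ‖A y‖ ≤ ‖y‖ := by
    intro A hA y
    obtain ⟨i, _, rfl⟩ := List.mem_map.mp hA
    have h1 : ((1 : H →L[ℝ] H) - P i) y = y - P i y := rfl
    rw [h1]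
    exact aux_sq_le (norm_nonneg _) (norm_nonneg _)
      (by nlinarith [hPyth i y, sq_nonneg ‖P i y‖])
  have hQle : ∀ x : H, ‖Q x‖ ≤ ‖x‖ := fun x => by
    rw [hQmap]; exact aux_N1 _ hmemle x
  have hQproj : ∀ (j : Fin d) (x : H), ‖P j x‖ ^ 2 ≤ 4 ^ d * (‖x‖ ^ 2 - ‖Q x‖ ^ 2) := by
    intro j x
    have h1 := aux_N2 P hPle hPyth (List.finRange d) x j (List.mem_finRange j)
    rwa [List.length_finRange, ← hQmap] at h1
  by_contra hno
  push_neg at hno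
  have hseq : ∀ n : ℕ, ∃ f : H, f ∈ (⨆ j, Hsub j : Submodule ℝ H) ∧ ‖f‖ = 1 ∧
      1 - 1 / (n + 1) < ‖Q f‖ := by
    intro n
    have hnpos : (0:ℝ) < 1 / (n + 1) := by positivity
    have hnle : (1:ℝ) / (n + 1) ≤ 1 := by
      rw [div_le_one (by positivity)]
      have : (0:ℝ) ≤ n := Nat.cast_nonneg n
      linarith
    obtain ⟨f, hfV, hf⟩ := hno (1 - 1 / (n + 1)) (by linarith) (by linarith)
    have hf0 : f ≠ 0 := by
      intro h
      rw [h] at hf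
      simp at hf
    have hfpos : 0 < ‖f‖ := norm_pos_iff.mpr hf0
    refine ⟨‖f‖⁻¹ • f, Submodule.smul_mem _ _ hfV, ?_, ?_⟩
    · rw [norm_smul, norm_inv, norm_norm]; field_simp
    · rw [map_smul, norm_smul, norm_inv, norm_norm]
      rw [lt_inv_mul_iff₀ hfpos]
      calc ‖f‖ * (1 - 1 / (↑n + 1)) = (1 - 1 / (↑n + 1)) * ‖f‖ := by ring
        _ < ‖Q f‖ := hf
  choose f hfV hfn hfQ using hseq
  have hPj0 : ∀ j, Filter.Tendsto (fun n => P j (f n)) Filter.atTop (nhds 0) := by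
    intro j
    have hb : Filter.Tendsto (fun n : ℕ => (4:ℝ) ^ d * (1 - (1 - 1 / (n + 1)) ^ 2))
        Filter.atTop (nhds 0) := by
      have h1 : Filter.Tendsto (fun n : ℕ => 1 / ((n:ℝ) + 1)) Filter.atTop (nhds 0) :=
        tendsto_one_div_add_atTop_nhds_zero_nat
      have hone : Filter.Tendsto (fun _ : ℕ => (1:ℝ)) Filter.atTop (nhds 1) :=
        tendsto_const_nhds
      have h2 := (((hone.sub h1).pow 2).const_sub 1).const_mul ((4:ℝ) ^ d)
      simpa using h2
    have hsq : Filter.Tendsto (fun n => ‖P j (f n)‖ ^ 2) Filter.atTop (nhds 0) := by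
      apply squeeze_zero (fun n => sq_nonneg _) (fun n => ?_) hb
      have h3 := hQproj j (f n)
      have h4 : ‖Q (f n)‖ ≤ 1 := (hQle (f n)).trans_eq (hfn n)
      have h5 : (0:ℝ) ≤ 1 - 1 / (n + 1) := by
        have : (1:ℝ) / (n + 1) ≤ 1 := by
          rw [div_le_one (by positivity)]
          have : (0:ℝ) ≤ n := Nat.cast_nonneg n
          linarith
        linarith
      have h6 : (1 - 1 / ((n:ℝ) + 1)) ^ 2 ≤ ‖Q (f n)‖ ^ 2 :=
        pow_le_pow_left₀ h5 (hfQ n).le 2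
      have h7 : ‖f n‖ ^ 2 = 1 := by rw [hfn n]; norm_num
      calc ‖P j (f n)‖ ^ 2 ≤ 4 ^ d * (‖f n‖ ^ 2 - ‖Q (f n)‖ ^ 2) := h3
        _ ≤ (4:ℝ) ^ d * (1 - (1 - 1 / (n + 1)) ^ 2) := by
            rw [h7]
            have h8 : (0:ℝ) ≤ (4:ℝ) ^ d := by positivity
            nlinarith
    rw [tendsto_zero_iff_norm_tendsto_zero]
    have h9 := (Real.continuous_sqrt.tendsto 0).comp hsq
    rw [Real.sqrt_zero] at h9
    exact h9.congr fun n => by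
      simp only [Function.comp_apply]
      rw [Real.sqrt_sq (norm_nonneg _)]
  -- preimages under T
  have hx : ∀ n : ℕ, ∃ x : ∀ j, Hsub j, T x = f n := by
    intro n
    have h1 : f n ∈ Set.range T := by rw [← hrange]; exact SetLike.mem_coe.mpr (hfV n)
    exact h1
  choose x hxT using hx
  have hxb : ∀ n j, ‖x n j‖ ≤ c⁻¹ := by
    intro n j
    refine (norm_le_pi_norm (x n) j).trans ?_
    have h1 := hcb (x n)
    rw [hxT n, hfn n] at h1
    have h2 : ‖x n‖ ≤ c⁻¹ * 1 := (le_inv_mul_iff₀ hc).mpr h1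
    simpa using h2
  have hPT2 : ∀ k, Filter.Tendsto (fun n => P k (∑ j, ((x n j : H))))
      Filter.atTop (nhds 0) := by
    intro k
    have h1 : (fun n => P k (∑ j, ((x n j : H)))) = fun n => P k (f n) :=
      funext fun n => by rw [← hTapp, hxT]
    rw [h1]
    exact hPj0 k
  obtain ⟨g, hg⟩ := limC x c⁻¹ hxb hPT2
  have hfU : Filter.Tendsto f (↑U) (nhds (T g)) := by
    have h1 := (T.continuous.tendsto g).comp hg
    have h2 : (fun n => T (x n)) = f := funext fun n => hxT n
    rwa [← h2]
  have hggnorm : ‖T g‖ = 1 := by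
    have h1 : Filter.Tendsto (fun n => ‖f n‖) (↑U) (nhds ‖T g‖) :=
      (continuous_norm.tendsto (T g)).comp hfU
    have h2 : Filter.Tendsto (fun n => ‖f n‖) (↑U) (nhds 1) := by
      simp only [hfn]; exact tendsto_const_nhds
    exact tendsto_nhds_unique h1 h2
  have hPgg : ∀ j, P j (T g) = 0 := fun j =>
    tendsto_nhds_unique (((P j).continuous.tendsto (T g)).comp hfU) ((hPj0 j).mono_left hU)
  have hperp : ∀ j, T g ∈ (Hsub j)ᗮ := by
    intro j
    have h1 := hP_orth j (T g)
    rwa [hPgg j, sub_zero] at h1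
  have hgg0 : T g = 0 := by
    have h8 : (inner ℝ (T g) (T g) : ℝ) = 0 := by
      have h9 : (inner ℝ (T g) (∑ k, ((g k : H))) : ℝ) = 0 := by
        rw [inner_sum]
        refine Finset.sum_eq_zero fun k _ => ?_
        rw [real_inner_comm]
        exact Submodule.inner_right_of_mem_orthogonal (g k).2 (hperp k)
      rwa [← hTapp g] at h9
    exact inner_self_eq_zero.mp h8
  rw [hgg0] at hggnorm
  simp at hggnorm
end

section
/- For every u ∈ H, one has Q u = u (i.e., Q_d Q_{d−1} ⋯ Q_1 u = u) if and only if Π_j u = 0 for every j = 1, …, d, that is, if and only if u is orthogonal to each subspace H_j. -/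
open scoped RealInnerProductSpace

section Aux

variable {H : Type*} [NormedAddCommGroup H] [InnerProductSpace ℝ H]

private lemma aux_pyth (K : Submodule ℝ H) (P : H →L[ℝ] H)
    (hmem : ∀ x, P x ∈ K) (horth : ∀ x, x - P x ∈ Kᗮ) (x : H) :
    ‖x - P x‖ ^ 2 + ‖P x‖ ^ 2 = ‖x‖ ^ 2 := by
  have h : ⟪P x, x - P x⟫ = 0 :=
    (K.mem_orthogonal (x - P x)).mp (horth x) (P x) (hmem x)
  have hx : x = P x + (x - P x) := by abel
  calc ‖x - P x‖ ^ 2 + ‖P x‖ ^ 2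
      = ‖P x‖ ^ 2 + 2 * ⟪P x, x - P x⟫ + ‖x - P x‖ ^ 2 := by rw [h]; ring
    _ = ‖P x + (x - P x)‖ ^ 2 := (norm_add_sq_real _ _).symm
    _ = ‖x‖ ^ 2 := by rw [← hx]

private lemma aux_prod_norm_le (M : List (H →L[ℝ] H))
    (h : ∀ q ∈ M, ∀ x, ‖q x‖ ≤ ‖x‖) (x : H) : ‖M.prod x‖ ≤ ‖x‖ := by
  induction M with
  | nil => simp
  | cons a M ih =>
      rw [List.prod_cons, ContinuousLinearMap.mul_apply]
      exact le_trans (h a (List.mem_cons_self) _)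
        (ih (fun q hq => h q (List.mem_cons_of_mem a hq)))

private lemma aux_key {ι : Type*} (P : ι → (H →L[ℝ] H))
    (hpy : ∀ j x, ‖x - P j x‖ ^ 2 + ‖P j x‖ ^ 2 = ‖x‖ ^ 2)
    (L : List ι) (u : H) :
    ((L.map fun j => (1 : H →L[ℝ] H) - P j).reverse.prod) u = u ↔
      ∀ j ∈ L, P j u = 0 := by
  have hle : ∀ j (x : H), ‖x - P j x‖ ≤ ‖x‖ := by
    intro j x
    nlinarith [hpy j x, norm_nonneg (x - P j x), norm_nonneg x, norm_nonneg (P j x)]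
  have hQapp : ∀ j (x : H), ((1 : H →L[ℝ] H) - P j) x = x - P j x := by
    intro j x; simp
  have hprodle : ∀ (L' : List ι) (x : H),
      ‖((L'.map fun j => (1 : H →L[ℝ] H) - P j).reverse.prod) x‖ ≤ ‖x‖ := by
    intro L' x
    apply aux_prod_norm_le
    intro q hq y
    rw [List.mem_reverse, List.mem_map] at hq
    obtain ⟨j, _, rfl⟩ := hq
    rw [hQapp]; exact hle j y
  induction L generalizing u with
  | nil => simp
  | cons j L ih =>
      have hsplit : ((((j :: L).map fun j => (1 : H →L[ℝ] H) - P j).reverse.prod)) u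
          = ((L.map fun j => (1 : H →L[ℝ] H) - P j).reverse.prod) (u - P j u) := by
        rw [List.map_cons, List.reverse_cons, List.prod_append, List.prod_singleton,
          ContinuousLinearMap.mul_apply, hQapp]
      rw [hsplit]
      constructor
      · intro h
        have h1 : ‖u‖ ≤ ‖u - P j u‖ := by
          calc ‖u‖ = ‖((L.map fun j => (1 : H →L[ℝ] H) - P j).reverse.prod) (u - P j u)‖ := by
                rw [h]
            _ ≤ ‖u - P j u‖ := hprodle L _
        have h2 : P j u = 0 := by
          have := hpy j u
          have hn : ‖P j u‖ = 0 := by nlinarith [norm_nonneg (P j u), norm_nonneg u]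
          exact norm_eq_zero.mp hn
        have h3 : u - P j u = u := by rw [h2, sub_zero]
        rw [h3] at h
        intro k hk
        rcases List.mem_cons.mp hk with rfl | hk
        · exact h2
        · exact (ih u).mp h k hk
      · intro h
        have h2 : P j u = 0 := h j (List.mem_cons_self)
        rw [h2, sub_zero]
        exact (ih u).mpr fun k hk => h k (List.mem_cons_of_mem j hk)

end Aux

/-- For every `u ∈ H`, one has `Q u = u` (i.e. `Q_d Q_{d−1} ⋯ Q_1 u = u`)
if and only if `Π_j u = 0` for every `j = 1, …, d`, that is, if and only if `u` is
orthogonal to each subspace `H_j`.  Here `H` is a real Hilbert space, `H₁, …, H_d`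
(`d ≥ 1`) are closed subspaces, `Π_j` is the orthogonal projection onto `H_j`, and
`Q_j = I − Π_j`. -/
theorem fixed_point_of_projection_product_iff_orthogonal
    (d : ℕ) (hd : 1 ≤ d)
    (H : Type*) [NormedAddCommGroup H] [InnerProductSpace ℝ H] [CompleteSpace H]
    (Hsub : Fin d → Submodule ℝ H)
    (hclosed : ∀ j, IsClosed ((Hsub j : Set H)))
    (P : Fin d → (H →L[ℝ] H))
    (hP_mem : ∀ j x, P j x ∈ Hsub j)
    (hP_orth : ∀ j x, x - P j x ∈ (Hsub j)ᗮ)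
    (u : H) :
    (((List.ofFn fun j : Fin d => (1 : H →L[ℝ] H) - P j).reverse.prod) u = u ↔
      ∀ j, P j u = 0) ∧
    ((∀ j, P j u = 0) ↔ ∀ j, u ∈ (Hsub j)ᗮ) := by
  constructor
  · have hpy : ∀ j (x : H), ‖x - P j x‖ ^ 2 + ‖P j x‖ ^ 2 = ‖x‖ ^ 2 :=
      fun j => aux_pyth (Hsub j) (P j) (hP_mem j) (hP_orth j)
    have := aux_key P hpy (List.finRange d) u
    rw [← List.ofFn_eq_map] at this
    simpa [List.mem_finRange] using this
  · constructor
    · intro h j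
      have := hP_orth j u
      rwa [h j, sub_zero] at this
    · intro h j
      have h1 : P j u ∈ (Hsub j)ᗮ := by
        have : P j u = u - (u - P j u) := by abel
        rw [this]
        exact Submodule.sub_mem _ (h j) (hP_orth j u)
      have h2 : ⟪P j u, P j u⟫ = 0 := h1 (P j u) (hP_mem j u)
      exact inner_self_eq_zero.mp h2
end

section
/- Let g ∈ H and let m_k ∈ H_k for k = 1, …, d. Define recursively, for j = 1, …, d, m_j' = Π_j ( g − Σ_{k<j} m_k' − Σ_{k>j} m_k ). Then the updated elements m_j' lie in H_j and satisfy g − Σ_{j=1}^d m_j' = Q_d Q_{d−1} ⋯ Q_1 ( g − Σ_{j=1}^d m_j ). -/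
/-- Let `g ∈ H` and let `m_k ∈ H_k` for `k = 1, …, d`.  Define recursively,
for `j = 1, …, d`, `m_j' = Π_j ( g − Σ_{k<j} m_k' − Σ_{k>j} m_k )`.  Then the updated
elements `m_j'` lie in `H_j` and satisfy
`g − Σ_{j=1}^d m_j' = Q_d Q_{d−1} ⋯ Q_1 ( g − Σ_{j=1}^d m_j )`,
where `Π_j` is the orthogonal projection onto the closed subspace `H_j` of the real
Hilbert space `H` and `Q_j = I − Π_j`. -/
theorem backfitting_sweep_eq_projection_product
    (d : ℕ) (hd : 1 ≤ d)
    (H : Type*) [NormedAddCommGroup H] [InnerProductSpace ℝ H] [CompleteSpace H]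
    (Hsub : Fin d → Submodule ℝ H)
    (hclosed : ∀ j, IsClosed ((Hsub j : Set H)))
    (P : Fin d → (H →L[ℝ] H))
    (hP_mem : ∀ j x, P j x ∈ Hsub j)
    (hP_orth : ∀ j x, x - P j x ∈ (Hsub j)ᗮ)
    (g : H) (m : Fin d → H) (hm : ∀ k, m k ∈ Hsub k)
    (m' : Fin d → H)
    (hm' : ∀ j, m' j =
      P j (g - ∑ k ∈ Finset.Iio j, m' k - ∑ k ∈ Finset.Ioi j, m k)) :
    (∀ j, m' j ∈ Hsub j) ∧
    g - ∑ j, m' j =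
      ((List.ofFn fun j : Fin d => (1 : H →L[ℝ] H) - P j).reverse.prod)
        (g - ∑ j, m j) := by
  -- P j fixes elements of Hsub j
  have hfix : ∀ (j : Fin d) (x : H), x ∈ Hsub j → P j x = x := by
    intro j x hx
    have h1 : x - P j x ∈ (Hsub j)ᗮ := hP_orth j x
    have h2 : x - P j x ∈ Hsub j := Submodule.sub_mem _ hx (hP_mem j x)
    have h3 : (inner ℝ (x - P j x) (x - P j x) : ℝ) =
        0 := (Submodule.mem_orthogonal _ _).mp h1 _ h2
    have h4 : x - P j x = 0 := inner_self_eq_zero.mp h3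
    exact (sub_eq_zero.mp h4).symm
  set L := List.ofFn fun j : Fin d => (1 : H →L[ℝ] H) - P j with hLdef
  set y : ℕ → H := fun n =>
    g - ∑ k ∈ Finset.univ.filter (fun k : Fin d => (k : ℕ) < n), m' k
      - ∑ k ∈ Finset.univ.filter (fun k : Fin d => n ≤ (k : ℕ)), m k with hydef
  have key : ∀ (j : Fin d), ((1 : H →L[ℝ] H) - P j) (y (j : ℕ)) = y ((j : ℕ) + 1) := by
    intro j
    have hIio : Finset.univ.filter (fun k : Fin d => (k : ℕ) < (j : ℕ)) = Finset.Iio j := by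
      ext k; simp only [Finset.mem_filter, Finset.mem_univ, true_and, Finset.mem_Iio, Fin.lt_def]
    have hIci : Finset.univ.filter (fun k : Fin d => (j : ℕ) ≤ (k : ℕ)) = Finset.Ici j := by
      ext k; simp only [Finset.mem_filter, Finset.mem_univ, true_and, Finset.mem_Ici, Fin.le_def]
    have hIic : Finset.univ.filter (fun k : Fin d => (k : ℕ) < (j : ℕ) + 1) = Finset.Iic j := by
      ext k; simp only [Finset.mem_filter, Finset.mem_univ, true_and, Finset.mem_Iic, Fin.le_def, Nat.lt_succ_iff]
    have hIoi : Finset.univ.filter (fun k : Fin d => (j : ℕ) + 1 ≤ (k : ℕ)) = Finset.Ioi j := by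
      ext k; simp only [Finset.mem_filter, Finset.mem_univ, true_and, Finset.mem_Ioi, Fin.lt_def, Nat.succ_le_iff]
    have hIciSum : ∑ k ∈ Finset.Ici j, m k = m j + ∑ k ∈ Finset.Ioi j, m k := by
      rw [← Finset.Ioi_insert, Finset.sum_insert (Finset.notMem_Ioi_self)]
    have hIicSum : ∑ k ∈ Finset.Iic j, m' k = m' j + ∑ k ∈ Finset.Iio j, m' k := by
      rw [← Finset.Iio_insert, Finset.sum_insert (Finset.notMem_Iio_self)]
    have hyj : y (j : ℕ) =
        (g - ∑ k ∈ Finset.Iio j, m' k - ∑ k ∈ Finset.Ioi j, m k) - m j := by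
      simp only [hydef, hIio, hIci, hIciSum]
      abel
    have hPy : P j (y (j : ℕ)) = m' j - m j := by
      rw [hyj, map_sub, ← hm' j, hfix j (m j) (hm j)]
    have : ((1 : H →L[ℝ] H) - P j) (y (j : ℕ)) = y (j : ℕ) - P j (y (j : ℕ)) := by
      simp [ContinuousLinearMap.sub_apply]
    rw [this, hPy, hyj]
    simp only [hydef, hIic, hIoi, hIicSum]
    abel
  have hL : L.length = d := by simp [hLdef]
  have main : ∀ n, n ≤ d → (L.take n).reverse.prod (y 0) = y n := by
    intro n hn
    induction n with
    | zero => simp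
    | succ n ih =>
      have hnd : n < d := hn
      have hget : L[n]? = some ((1 : H →L[ℝ] H) - P ⟨n, hnd⟩) := by
        rw [hLdef]
        simp [List.getElem?_ofFn, hnd]
      have hstep : L.take (n + 1) = L.take n ++ [(1 : H →L[ℝ] H) - P ⟨n, hnd⟩] := by
        rw [List.take_succ, hget]
        rfl
      rw [hstep, List.reverse_append]
      simp only [List.reverse_singleton, List.singleton_append, List.prod_cons,
        ContinuousLinearMap.mul_apply]
      rw [ih (le_of_lt hnd)]
      exact key ⟨n, hnd⟩
  have hy0 : y 0 = g - ∑ j, m j := by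
    simp [hydef]
  have hyd : y d = g - ∑ j, m' j := by
    have h1 : Finset.univ.filter (fun k : Fin d => (k : ℕ) < d) = Finset.univ := by
      ext k; simp [k.isLt]
    have h2 : Finset.univ.filter (fun k : Fin d => d ≤ (k : ℕ)) = ∅ := by
      ext k; simp [Nat.not_le.mpr k.isLt]
    simp [hydef, h1, h2]
  constructor
  · intro j
    rw [hm' j]
    exact hP_mem j _
  · have := main d le_rfl
    rw [hy0, hyd] at this
    rw [List.take_of_length_le hL.le] at this
    exact this.symm
end

section
/- Let g ∈ H and let m_j^{[0]} ∈ H_j for j = 1, …, d be given. For r = 1, 2, … define, for j = 1, …, d in order, m_j^{[r]} = Π_j ( g − Σ_{k<j} m_k^{[r]} − Σ_{k>j} m_k^{[r−1]} ), and set m^{[r]} = Σ_{j=1}^d m_j^{[r]}. Then for every r ≥ 1, m^{[r]} = Σ_{s=0}^{r−1} Q^s r̂ + Q^r m^{[0]}, where r̂ = (I − Q) g and Q^s denotes the s-fold composition of Q. -/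
/-- Let `g ∈ H` and let `m_j^{[0]} ∈ H_j` for `j = 1, …, d` be given.
For `r = 1, 2, …` define, for `j = 1, …, d` in order,
`m_j^{[r]} = Π_j ( g − Σ_{k<j} m_k^{[r]} − Σ_{k>j} m_k^{[r−1]} )`, and set
`m^{[r]} = Σ_{j=1}^d m_j^{[r]}`.  Then for every `r ≥ 1`,
`m^{[r]} = Σ_{s=0}^{r−1} Q^s r̂ + Q^r m^{[0]}`, where `r̂ = (I − Q) g`,
`Q = Q_d ∘ ⋯ ∘ Q_1` with `Q_j = I − Π_j`, and `Q^s` is the `s`-fold composition. -/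
theorem backfitting_iterates_formula
    (d : ℕ) (hd : 1 ≤ d)
    (H : Type*) [NormedAddCommGroup H] [InnerProductSpace ℝ H] [CompleteSpace H]
    (Hsub : Fin d → Submodule ℝ H)
    (hclosed : ∀ j, IsClosed ((Hsub j : Set H)))
    (P : Fin d → (H →L[ℝ] H))
    (hP_mem : ∀ j x, P j x ∈ Hsub j)
    (hP_orth : ∀ j x, x - P j x ∈ (Hsub j)ᗮ)
    (g : H) (M : ℕ → Fin d → H)
    (hM0 : ∀ j, M 0 j ∈ Hsub j)
    (hMrec : ∀ r : ℕ, ∀ j, M (r + 1) j =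
      P j (g - ∑ k ∈ Finset.Iio j, M (r + 1) k - ∑ k ∈ Finset.Ioi j, M r k)) :
    ∀ r : ℕ, 1 ≤ r →
      (∑ j, M r j) =
        (∑ s ∈ Finset.range r,
          (((List.ofFn fun j : Fin d => (1 : H →L[ℝ] H) - P j).reverse.prod) ^ s)
            (g - ((List.ofFn fun j : Fin d => (1 : H →L[ℝ] H) - P j).reverse.prod) g)) +
        ((((List.ofFn fun j : Fin d => (1 : H →L[ℝ] H) - P j).reverse.prod) ^ r)
          (∑ j, M 0 j)) := by
  set L : List (H →L[ℝ] H) := List.ofFn (fun j : Fin d => (1 : H →L[ℝ] H) - P j) with hLdef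
  set Q : H →L[ℝ] H := L.reverse.prod with hQdef
  -- projections fix their subspace
  have hfix : ∀ j, ∀ m ∈ Hsub j, P j m = m := by
    intro j m hm
    have h1 : m - P j m ∈ Hsub j := Submodule.sub_mem _ hm (hP_mem j m)
    have h2 := hP_orth j m
    have h3 : (inner ℝ (m - P j m) (m - P j m) : ℝ) = 0 :=
      (Submodule.mem_orthogonal _ _).1 h2 _ h1
    have : m - P j m = 0 := by rwa [inner_self_eq_zero] at h3
    exact (sub_eq_zero.mp this).symm
  have hmem : ∀ r j, M r j ∈ Hsub j := by
    intro r j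
    cases r with
    | zero => exact hM0 j
    | succ r => rw [hMrec]; exact hP_mem j _
  -- one full sweep
  have hstep : ∀ r, g - ∑ j, M (r + 1) j = Q (g - ∑ j, M r j) := by
    intro r
    have main : ∀ n, n ≤ d →
        ((L.take n).reverse.prod) (g - ∑ j, M r j)
          = g - (∑ j ∈ Finset.univ.filter fun j : Fin d => (j : ℕ) < n, M (r + 1) j)
              - (∑ j ∈ Finset.univ.filter fun j : Fin d => n ≤ (j : ℕ), M r j) := by
      intro n
      induction n with
      | zero =>
        intro _
        simp
      | succ n ih =>
        intro hn
        have hn' : n < d := hn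
        set i : Fin d := ⟨n, hn'⟩ with hidef
        have htake : L.take (n + 1) = L.take n ++ [(1 : H →L[ℝ] H) - P i] := by
          rw [List.take_succ]
          congr 1
          simp [hLdef, hn', hidef]
        have hIio : Finset.Iio i = Finset.univ.filter fun j : Fin d => (j : ℕ) < n := by
          ext k
          simp [Fin.lt_def, -Fin.val_fin_lt, hidef]
        have hIoi : Finset.Ioi i = Finset.univ.filter fun j : Fin d => n + 1 ≤ (j : ℕ) := by
          ext k
          simp [Fin.lt_def, -Fin.val_fin_lt, Nat.succ_le_iff, hidef]
        have hsplit : (Finset.univ.filter fun j : Fin d => n ≤ (j : ℕ))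
            = insert i (Finset.univ.filter fun j : Fin d => n + 1 ≤ (j : ℕ)) := by
          ext k
          simp only [Finset.mem_insert, Finset.mem_filter, Finset.mem_univ, true_and]
          constructor
          · intro hk
            rcases eq_or_lt_of_le hk with h | h
            · left; exact (Fin.ext h.symm)
            · right; exact h
          · rintro (rfl | hk)
            · exact le_refl n
            · exact Nat.le_of_succ_le hk
        have hnotmem : i ∉ (Finset.univ.filter fun j : Fin d => n + 1 ≤ (j : ℕ)) := by simp [hidef]
        have hsplit2 : (Finset.univ.filter fun j : Fin d => (j : ℕ) < n + 1)
            = insert i (Finset.univ.filter fun j : Fin d => (j : ℕ) < n) := by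
          ext k
          simp only [Finset.mem_insert, Finset.mem_filter, Finset.mem_univ, true_and]
          constructor
          · intro hk
            rcases Nat.lt_succ_iff_lt_or_eq.mp hk with h | h
            · right; exact h
            · left; exact Fin.ext h
          · rintro (rfl | hk)
            · exact Nat.lt_succ_self n
            · exact Nat.lt_succ_of_lt hk
        have hnotmem2 : i ∉ (Finset.univ.filter fun j : Fin d => (j : ℕ) < n) := by simp [hidef]
        rw [htake, List.reverse_append]
        simp only [List.reverse_cons, List.reverse_nil, List.nil_append, List.singleton_append,
          List.prod_cons, ContinuousLinearMap.mul_apply]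
        rw [ih (Nat.le_of_lt hn')]
        -- notation
        set A : H := ∑ j ∈ Finset.univ.filter fun j : Fin d => (j : ℕ) < n, M (r + 1) j with hA
        set C : H := ∑ j ∈ Finset.univ.filter fun j : Fin d => n + 1 ≤ (j : ℕ), M r j with hC
        have hB : (∑ j ∈ Finset.univ.filter fun j : Fin d => n ≤ (j : ℕ), M r j)
            = M r i + C := by rw [hsplit, Finset.sum_insert hnotmem]
        have hPy : P i (g - A - C) = M (r + 1) i := by
          rw [hA, hC, ← hIio, ← hIoi, ← hMrec]
        have hPi : P i (M r i) = M r i := hfix i _ (hmem r i)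
        have happ : ((1 : H →L[ℝ] H) - P i) (g - A - (M r i + C))
            = g - A - (M r i + C) - (P i (g - A - C) - P i (M r i)) := by
          have : g - A - (M r i + C) = (g - A - C) - M r i := by abel
          rw [this]
          simp only [ContinuousLinearMap.sub_apply, ContinuousLinearMap.one_apply, map_sub]
          abel
        rw [hB, happ, hPy, hPi, hsplit2, Finset.sum_insert hnotmem2, ← hA]
        abel
    have h1 := main d (le_refl d)
    have htaked : L.take d = L := by
      apply List.take_of_length_le
      simp [hLdef]
    have hfl1 : (Finset.univ.filter fun j : Fin d => (j : ℕ) < d) = Finset.univ := by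
      ext k; simp [k.isLt]
    have hfl2 : (Finset.univ.filter fun j : Fin d => d ≤ (j : ℕ)) = ∅ := by
      ext k; simp [Nat.not_le.mpr k.isLt]
    rw [htaked, hfl1, hfl2] at h1
    simp only [Finset.sum_empty, sub_zero] at h1
    exact h1.symm
  -- iterate
  have hiter : ∀ r, g - ∑ j, M r j = (Q ^ r) (g - ∑ j, M 0 j) := by
    intro r
    induction r with
    | zero => simp
    | succ r ih =>
      rw [hstep r, ih, pow_succ', ContinuousLinearMap.mul_apply]
  intro r _
  have hiter' := hiter r
  have hsum : ∑ j, M r j = g - (Q ^ r) g + (Q ^ r) (∑ j, M 0 j) := by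
    have := hiter'
    rw [map_sub] at this
    have h2 : ∑ j, M r j = g - ((Q ^ r) g - (Q ^ r) (∑ j, M 0 j)) := by
      rw [← this]; abel
    rw [h2]; abel
  have htel : (∑ s ∈ Finset.range r, (Q ^ s) (g - Q g)) = g - (Q ^ r) g := by
    have : ∀ s, (Q ^ s) (g - Q g) = (Q ^ s) g - (Q ^ (s + 1)) g := by
      intro s
      rw [map_sub, pow_succ, ContinuousLinearMap.mul_apply]
    calc (∑ s ∈ Finset.range r, (Q ^ s) (g - Q g))
        = ∑ s ∈ Finset.range r, ((Q ^ s) g - (Q ^ (s + 1)) g) := by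
          exact Finset.sum_congr rfl fun s _ => this s
      _ = (Q ^ 0) g - (Q ^ r) g := Finset.sum_range_sub' (fun s => (Q ^ s) g) r
      _ = g - (Q ^ r) g := by simp
  rw [hsum, htel]
end

section
/- Let K be a probability density function on ℝ supported on [−1,1], π ≥ 0 an integer, μ = (μ_0(K), …, μ_π(K))ᵀ and N₁ = (μ_{ℓ+ℓ'}(K))_{ℓ,ℓ'=0}^{π}. Let A be a d×d real symmetric positive definite matrix and D = diag(A_{11}, …, A_{dd}) the diagonal matrix of its diagonal entries. Then the (π+1)d × (π+1)d matrix A ⊗ (μ μᵀ) + D ⊗ (N₁ − μ μᵀ) is symmetric positive definite, where ⊗ denotes the Kronecker product. -/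
open MeasureTheory Matrix Kronecker

section aux
variable {π : ℕ}

noncomputable def Pev (v : Fin (π+1) → ℝ) (u : ℝ) : ℝ := ∑ ℓ : Fin (π+1), v ℓ * u ^ (ℓ : ℕ)

variable (K : ℝ → ℝ)

lemma intg_pow (hKmeas : Measurable K)
    (hKsupp : ∀ u : ℝ, u ∉ Set.Icc (-1 : ℝ) 1 → K u = 0)
    (hK : Integrable K) (n : ℕ) : Integrable (fun u => u ^ n * K u) := by
  refine hK.mono ((measurable_id.pow_const n).mul hKmeas).aestronglyMeasurable
    (Filter.Eventually.of_forall fun u => ?_)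
  by_cases hu : u ∈ Set.Icc (-1 : ℝ) 1
  · have h1 : |u| ≤ 1 := abs_le.2 ⟨hu.1, hu.2⟩
    have h2 : |u ^ n| ≤ 1 := by rw [abs_pow]; exact pow_le_one₀ (abs_nonneg u) h1
    simp only [norm_mul, Real.norm_eq_abs]
    calc |u ^ n| * |K u| ≤ 1 * |K u| := mul_le_mul_of_nonneg_right h2 (abs_nonneg _)
      _ = |K u| := one_mul _
  · simp [hKsupp u hu]

lemma intg_P (hKmeas : Measurable K)
    (hKsupp : ∀ u : ℝ, u ∉ Set.Icc (-1 : ℝ) 1 → K u = 0)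
    (hK : Integrable K) (v : Fin (π+1) → ℝ) :
    Integrable (fun u => Pev v u * K u) := by
  have : (fun u => Pev v u * K u)
      = fun u => ∑ ℓ : Fin (π+1), v ℓ * (u ^ (ℓ : ℕ) * K u) := by
    funext u; simp [Pev, Finset.sum_mul, mul_assoc]
  rw [this]
  exact integrable_finset_sum _ fun ℓ _ =>
    ((intg_pow K hKmeas hKsupp hK ℓ).const_mul _)

lemma intg_PP (hKmeas : Measurable K)
    (hKsupp : ∀ u : ℝ, u ∉ Set.Icc (-1 : ℝ) 1 → K u = 0)
    (hK : Integrable K) (v w : Fin (π+1) → ℝ) :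
    Integrable (fun u => Pev v u * Pev w u * K u) := by
  have : (fun u => Pev v u * Pev w u * K u)
      = fun u => ∑ k : Fin (π+1), ∑ l : Fin (π+1),
          (v k * w l) * (u ^ ((k : ℕ) + (l : ℕ)) * K u) := by
    funext u
    rw [Pev, Pev, Finset.sum_mul_sum, Finset.sum_mul]
    refine Finset.sum_congr rfl fun k _ => ?_
    rw [Finset.sum_mul]
    refine Finset.sum_congr rfl fun l _ => ?_
    rw [pow_add]; ring
  rw [this]
  exact integrable_finset_sum _ fun k _ => integrable_finset_sum _ fun l _ =>
    ((intg_pow K hKmeas hKsupp hK _).const_mul _)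

lemma int_P (hKmeas : Measurable K)
    (hKsupp : ∀ u : ℝ, u ∉ Set.Icc (-1 : ℝ) 1 → K u = 0)
    (hK : Integrable K) (v : Fin (π+1) → ℝ) (μvec : Fin (π+1) → ℝ)
    (hμ : ∀ ℓ : Fin (π + 1), μvec ℓ = ∫ u : ℝ, u ^ (ℓ : ℕ) * K u) :
    ∫ u, Pev v u * K u = μvec ⬝ᵥ v := by
  have : (fun u => Pev v u * K u)
      = fun u => ∑ ℓ : Fin (π+1), v ℓ * (u ^ (ℓ : ℕ) * K u) := by
    funext u; simp [Pev, Finset.sum_mul, mul_assoc]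
  rw [this, integral_finset_sum (f := fun (ℓ : Fin (π+1)) u => v ℓ * (u ^ (ℓ:ℕ) * K u)) _
    (fun ℓ _ => ((intg_pow K hKmeas hKsupp hK ℓ).const_mul _))]
  simp only [integral_const_mul, dotProduct]
  refine Finset.sum_congr rfl fun ℓ _ => ?_
  rw [hμ ℓ]; ring

lemma int_PP (hKmeas : Measurable K)
    (hKsupp : ∀ u : ℝ, u ∉ Set.Icc (-1 : ℝ) 1 → K u = 0)
    (hK : Integrable K) (v w : Fin (π+1) → ℝ)
    (N₁ : Matrix (Fin (π + 1)) (Fin (π + 1)) ℝ)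
    (hN₁ : ∀ ℓ ℓ' : Fin (π + 1), N₁ ℓ ℓ' = ∫ u : ℝ, u ^ ((ℓ : ℕ) + (ℓ' : ℕ)) * K u) :
    ∫ u, Pev v u * Pev w u * K u = v ⬝ᵥ (N₁ *ᵥ w) := by
  have : (fun u => Pev v u * Pev w u * K u)
      = fun u => ∑ k : Fin (π+1), ∑ l : Fin (π+1),
          (v k * w l) * (u ^ ((k : ℕ) + (l : ℕ)) * K u) := by
    funext u
    rw [Pev, Pev, Finset.sum_mul_sum, Finset.sum_mul]
    refine Finset.sum_congr rfl fun k _ => ?_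
    rw [Finset.sum_mul]
    refine Finset.sum_congr rfl fun l _ => ?_
    rw [pow_add]; ring
  rw [this, integral_finset_sum
    (f := fun (k : Fin (π+1)) u => ∑ l : Fin (π+1), (v k * w l) * (u ^ ((k:ℕ)+(l:ℕ)) * K u)) _
    (fun k _ => integrable_finset_sum _ fun l _ =>
      ((intg_pow K hKmeas hKsupp hK _).const_mul _))]
  simp only [dotProduct, mulVec, dotProduct]
  refine Finset.sum_congr rfl fun k _ => ?_
  rw [integral_finset_sum
    (f := fun (l : Fin (π+1)) u => (v k * w l) * (u ^ ((k:ℕ)+(l:ℕ)) * K u)) _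
    (fun l _ => ((intg_pow K hKmeas hKsupp hK _).const_mul _)), Finset.mul_sum]
  refine Finset.sum_congr rfl fun l _ => ?_
  rw [integral_const_mul, hN₁ k l]; ring

end aux

section pos
variable {K : ℝ → ℝ}

lemma K_int (hKint : ∫ u : ℝ, K u = 1) : Integrable K := by
  by_contra h
  rw [integral_undef h] at hKint
  norm_num at hKint

lemma var_ge (hKmeas : Measurable K) (hKnonneg : ∀ u, 0 ≤ K u)
    (hKint : ∫ u : ℝ, K u = 1)
    (hKsupp : ∀ u : ℝ, u ∉ Set.Icc (-1 : ℝ) 1 → K u = 0)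
    {π : ℕ} (v : Fin (π+1) → ℝ) :
    (∫ u, Pev v u * K u) ^ 2 ≤ ∫ u, Pev v u * Pev v u * K u := by
  have hK := K_int hKint
  set a := ∫ u, Pev v u * K u with ha
  have key : ∫ u, (Pev v u - a) ^ 2 * K u
      = (∫ u, Pev v u * Pev v u * K u) - a ^ 2 := by
    have he : (fun u => (Pev v u - a) ^ 2 * K u)
        = fun u => (Pev v u * Pev v u * K u) - (2 * a) * (Pev v u * K u)
            + a ^ 2 * K u := by funext u; ring
    rw [he, integral_add (f := fun u => Pev v u * Pev v u * K u - 2 * a * (Pev v u * K u))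
        (g := fun u => a ^ 2 * K u)
        ((intg_PP K hKmeas hKsupp hK v v).sub
          ((intg_P K hKmeas hKsupp hK v).const_mul _)) (hK.const_mul _),
      integral_sub (intg_PP K hKmeas hKsupp hK v v)
        ((intg_P K hKmeas hKsupp hK v).const_mul _),
      integral_const_mul, integral_const_mul, hKint, ← ha]
    ring
  have hnn : 0 ≤ ∫ u, (Pev v u - a) ^ 2 * K u :=
    integral_nonneg fun u => mul_nonneg (sq_nonneg _) (hKnonneg u)
  linarith [key ▸ hnn]

lemma PPK_pos (hKmeas : Measurable K) (hKnonneg : ∀ u, 0 ≤ K u)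
    (hKint : ∫ u : ℝ, K u = 1)
    (hKsupp : ∀ u : ℝ, u ∉ Set.Icc (-1 : ℝ) 1 → K u = 0)
    {π : ℕ} {v : Fin (π+1) → ℝ} (hv : v ≠ 0) :
    0 < ∫ u, Pev v u * Pev v u * K u := by
  have hK := K_int hKint
  have hnn : ∀ u, 0 ≤ Pev v u * Pev v u * K u :=
    fun u => mul_nonneg (mul_self_nonneg _) (hKnonneg u)
  rcases lt_or_eq_of_le (integral_nonneg (f := fun u => Pev v u * Pev v u * K u) hnn) with h | h
  · exact h
  exfalso
  have hzero : (fun u => Pev v u * Pev v u * K u) =ᵐ[volume] 0 :=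
    (integral_eq_zero_iff_of_nonneg hnn (intg_PP K hKmeas hKsupp hK v v)).1 h.symm
  -- polynomial
  set p : Polynomial ℝ := ∑ ℓ : Fin (π+1), Polynomial.C (v ℓ) * Polynomial.X ^ (ℓ : ℕ) with hp
  have heval : ∀ u, p.eval u = Pev v u := by
    intro u; simp [hp, Pev, Polynomial.eval_finset_sum]
  obtain ⟨ℓ₀, hℓ₀⟩ := Function.ne_iff.1 hv
  simp only [Pi.zero_apply] at hℓ₀
  have hcoeff : p.coeff (ℓ₀ : ℕ) = v ℓ₀ := by
    rw [hp, Polynomial.finset_sum_coeff]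
    rw [Finset.sum_eq_single ℓ₀]
    · simp
    · intro ℓ _ hne
      have : (ℓ : ℕ) ≠ (ℓ₀ : ℕ) := fun hc => hne (Fin.val_injective hc)
      simp [Polynomial.coeff_X_pow, Ne.symm this]
    · simp
  have hpne : p ≠ 0 := fun hc => by simp [hc] at hcoeff; exact hℓ₀ hcoeff.symm
  have hfin : Set.Finite {u : ℝ | p.IsRoot u} := Polynomial.finite_setOf_isRoot hpne
  have hroot0 : volume {u : ℝ | Pev v u = 0} = 0 := by
    have : {u : ℝ | Pev v u = 0} = {u : ℝ | p.IsRoot u} := by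
      ext u; simp [Polynomial.IsRoot, heval u]
    rw [this]; exact hfin.measure_zero _
  have hae : ∀ᵐ u : ℝ, Pev v u ≠ 0 := by
    rw [ae_iff]
    simpa using hroot0
  have hKae : K =ᵐ[volume] 0 := by
    filter_upwards [hzero, hae] with u h1 h2
    have := mul_eq_zero.1 h1
    rcases this with h | h
    · exact absurd (mul_self_eq_zero.1 h) h2
    · exact h
  have : (∫ u : ℝ, K u) = 0 := by
    rw [integral_congr_ae hKae]; simp
  rw [hKint] at this; norm_num at this

end pos

lemma kron_quad {d m : ℕ} (B : Matrix (Fin d) (Fin d) ℝ) (C : Matrix (Fin m) (Fin m) ℝ)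
    (x : Fin d × Fin m → ℝ) :
    x ⬝ᵥ ((B ⊗ₖ C) *ᵥ x)
      = ∑ i, ∑ j, B i j * ((fun k => x (i, k)) ⬝ᵥ (C *ᵥ fun l => x (j, l))) := by
  simp only [dotProduct, mulVec, dotProduct, kroneckerMap_apply, Fintype.sum_prod_type,
    Finset.mul_sum, Finset.sum_mul]
  refine Finset.sum_congr rfl fun i _ => ?_
  rw [Finset.sum_comm]
  refine Finset.sum_congr rfl fun j _ => Finset.sum_congr rfl fun k _ =>
    Finset.sum_congr rfl fun l _ => ?_
  ring

lemma vmv_quad {m : ℕ} (μ v w : Fin m → ℝ) :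
    v ⬝ᵥ (vecMulVec μ μ *ᵥ w) = (μ ⬝ᵥ v) * (μ ⬝ᵥ w) := by
  simp only [dotProduct, mulVec, dotProduct, vecMulVec_apply, Finset.mul_sum,
    Finset.sum_mul, Finset.sum_mul_sum]
  rw [Finset.sum_comm]
  refine Finset.sum_congr rfl fun k _ => Finset.sum_congr rfl fun l _ => ?_
  ring

lemma quad_expand {d : ℕ} (A : Matrix (Fin d) (Fin d) ℝ) (s : Fin d → ℝ) :
    s ⬝ᵥ (A *ᵥ s) = ∑ i, ∑ j, A i j * (s i * s j) := by
  simp only [dotProduct, mulVec, Finset.mul_sum]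
  exact Finset.sum_congr rfl fun i _ => Finset.sum_congr rfl fun j _ => by ring

lemma diag_pos_of_posDef {d : ℕ} {A : Matrix (Fin d) (Fin d) ℝ} (hA : A.PosDef)
    (i : Fin d) : 0 < A i i := by
  have h := hA.dotProduct_mulVec_pos (x := Pi.single i 1) (by
    intro hc
    have := congrFun hc i
    simp at this)
  simpa [dotProduct, mulVec, Pi.single_apply, Finset.mul_sum] using h

/-- Let `K` be a probability density function on `ℝ` supported on `[−1,1]`,
`π ≥ 0` an integer, `μ = (μ_0(K), …, μ_π(K))ᵀ` and `N₁ = (μ_{ℓ+ℓ'}(K))_{ℓ,ℓ'=0}^{π}`.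
Let `A` be a `d×d` real symmetric positive definite matrix and
`D = diag(A_{11}, …, A_{dd})` the diagonal matrix of its diagonal entries.  Then the
`(π+1)d × (π+1)d` matrix `A ⊗ (μ μᵀ) + D ⊗ (N₁ − μ μᵀ)` is symmetric positive definite,
where `⊗` denotes the Kronecker product. -/
theorem kronecker_moment_matrix_posDef
    (K : ℝ → ℝ) (hKmeas : Measurable K) (hKnonneg : ∀ u, 0 ≤ K u)
    (hKint : ∫ u : ℝ, K u = 1)
    (hKsupp : ∀ u : ℝ, u ∉ Set.Icc (-1 : ℝ) 1 → K u = 0)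
    (π : ℕ)
    (μvec : Fin (π + 1) → ℝ)
    (hμ : ∀ ℓ : Fin (π + 1), μvec ℓ = ∫ u : ℝ, u ^ (ℓ : ℕ) * K u)
    (N₁ : Matrix (Fin (π + 1)) (Fin (π + 1)) ℝ)
    (hN₁ : ∀ ℓ ℓ' : Fin (π + 1), N₁ ℓ ℓ' = ∫ u : ℝ, u ^ ((ℓ : ℕ) + (ℓ' : ℕ)) * K u)
    (d : ℕ) (hd : 1 ≤ d)
    (A : Matrix (Fin d) (Fin d) ℝ) (hA : A.PosDef)
    (D : Matrix (Fin d) (Fin d) ℝ) (hD : D = Matrix.diagonal (fun j => A j j)) :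
    (A ⊗ₖ vecMulVec μvec μvec + D ⊗ₖ (N₁ - vecMulVec μvec μvec)).PosDef := by
  have hK : Integrable K := K_int hKint
  rw [Matrix.posDef_iff_dotProduct_mulVec]
  constructor
  · -- Hermitian
    have hAs : ∀ i j, A j i = A i j := fun i j => by
      have := congrFun (congrFun hA.1 i) j
      simpa [Matrix.conjTranspose_apply] using this
    have hNs : ∀ k l : Fin (π+1), N₁ l k = N₁ k l := fun k l => by
      rw [hN₁, hN₁, Nat.add_comm]
    have hDs : ∀ i j, D j i = D i j := fun i j => by
      rw [hD]; by_cases h : i = j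
      · subst h; rfl
      · rw [Matrix.diagonal_apply_ne _ (Ne.symm h), Matrix.diagonal_apply_ne _ h]
    show _ᴴ = _
    ext ⟨i, k⟩ ⟨j, l⟩
    simp only [Matrix.conjTranspose_apply, Matrix.add_apply, Matrix.kroneckerMap_apply,
      Matrix.vecMulVec_apply, Matrix.sub_apply, star_trivial]
    rw [hAs i j, hNs k l, hDs i j]; ring
  · intro x hx
    have hstar : star x = x := rfl
    rw [hstar, Matrix.add_mulVec, dotProduct_add, kron_quad, kron_quad]
    set s : Fin d → ℝ := fun i => μvec ⬝ᵥ (fun k => x (i, k)) with hs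
    have h1 : ∑ i, ∑ j, A i j *
        ((fun k => x (i, k)) ⬝ᵥ (vecMulVec μvec μvec *ᵥ fun l => x (j, l)))
        = s ⬝ᵥ (A *ᵥ s) := by
      refine Eq.trans (Finset.sum_congr rfl fun i _ =>
        Finset.sum_congr rfl fun j _ => by rw [vmv_quad]) ?_
      exact (quad_expand A s).symm
    have h2 : ∑ i, ∑ j, D i j *
        ((fun k => x (i, k)) ⬝ᵥ ((N₁ - vecMulVec μvec μvec) *ᵥ fun l => x (j, l)))
        = ∑ i, A i i *
            ((fun k => x (i, k)) ⬝ᵥ (N₁ *ᵥ fun l => x (i, l)) - s i * s i) := by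
      refine Finset.sum_congr rfl fun i _ => ?_
      rw [Finset.sum_eq_single i]
      · rw [hD, Matrix.diagonal_apply_eq]
        congr 1
        rw [Matrix.sub_mulVec, dotProduct_sub, vmv_quad]
      · intro j _ hj
        rw [hD, Matrix.diagonal_apply_ne _ (Ne.symm hj), zero_mul]
      · intro h; exact absurd (Finset.mem_univ i) h
    rw [h1, h2]
    -- quadratic facts
    have hNquad : ∀ i, (fun k => x (i, k)) ⬝ᵥ (N₁ *ᵥ fun l => x (i, l))
        = ∫ u, Pev (fun k => x (i, k)) u * Pev (fun k => x (i, k)) u * K u :=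
      fun i => (int_PP K hKmeas hKsupp hK _ _ N₁ hN₁).symm
    have hsquad : ∀ i, s i = ∫ u, Pev (fun k => x (i, k)) u * K u :=
      fun i => (int_P K hKmeas hKsupp hK _ μvec hμ).symm
    have hq_nonneg : ∀ i, 0 ≤ (fun k => x (i, k)) ⬝ᵥ (N₁ *ᵥ fun l => x (i, l)) - s i * s i := by
      intro i
      rw [hNquad i, hsquad i, sub_nonneg, ← sq]
      exact var_ge hKmeas hKnonneg hKint hKsupp _
    have hApos : ∀ i, 0 < A i i := diag_pos_of_posDef hA
    have hterm : ∀ i ∈ Finset.univ, 0 ≤ A i i *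
        ((fun k => x (i, k)) ⬝ᵥ (N₁ *ᵥ fun l => x (i, l)) - s i * s i) :=
      fun i _ => mul_nonneg (hApos i).le (hq_nonneg i)
    by_cases hs0 : s = 0
    · obtain ⟨i₀, hvi₀⟩ : ∃ i₀, (fun k => x (i₀, k)) ≠ 0 := by
        by_contra hcon
        push_neg at hcon
        apply hx
        funext p
        exact congrFun (hcon p.1) p.2
      have hsA : s ⬝ᵥ (A *ᵥ s) = 0 := by rw [hs0]; simp
      have hqi : 0 < (fun k => x (i₀, k)) ⬝ᵥ (N₁ *ᵥ fun l => x (i₀, l)) - s i₀ * s i₀ := by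
        have : s i₀ = 0 := congrFun hs0 i₀
        rw [this, mul_zero, sub_zero, hNquad i₀]
        exact PPK_pos hKmeas hKnonneg hKint hKsupp hvi₀
      have hle := Finset.single_le_sum hterm (Finset.mem_univ i₀)
      have hlt : 0 < A i₀ i₀ *
          ((fun k => x (i₀, k)) ⬝ᵥ (N₁ *ᵥ fun l => x (i₀, l)) - s i₀ * s i₀) :=
        mul_pos (hApos i₀) hqi
      linarith
    · have hsA : 0 < s ⬝ᵥ (A *ᵥ s) := by
        have := hA.dotProduct_mulVec_pos hs0
        rwa [show star s = s from rfl] at this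
      have hsum : 0 ≤ ∑ i, A i i *
          ((fun k => x (i, k)) ⬝ᵥ (N₁ *ᵥ fun l => x (i, l)) - s i * s i) :=
        Finset.sum_nonneg hterm
      linarith
end

section
/- Let (X, Z) be a random vector with X = (X₁, …, X_d) and Z = (Z₁, …, Z_d) taking values in ℝ^d × ℝ^d, with E|Z|² < ∞, and suppose there is c > 0 such that almost surely vᵀ E[Z Zᵀ | X] v ≥ c |v|² for all v ∈ ℝ^d. Let f₁, …, f_d : ℝ → ℝ be measurable with E[f_j(X_j)²] < ∞ for each j and E[(Σ_{j=1}^d f_j(X_j) Z_j)²] < ∞. Then E[(Σ_{j=1}^d f_j(X_j) Z_j)²] ≥ c Σ_{j=1}^d E[f_j(X_j)²]; in particular, if Σ_{j=1}^d f_j(X_j) Z_j = 0 almost surely, then f_j(X_j) = 0 almost surely for every j. -/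
open MeasureTheory ProbabilityTheory

private lemma aux_indicator_integrable {Ω : Type*} {mΩ : MeasurableSpace Ω} {μ : Measure Ω}
    {f : Ω → ℝ} {s : Set Ω} (hf : Integrable f μ) (hs : MeasurableSet[mΩ] s) :
    Integrable (s.indicator f) μ := hf.indicator hs

/-- Let `(X, Z)` be a random vector with `X = (X₁, …, X_d)` and
`Z = (Z₁, …, Z_d)` taking values in `ℝ^d × ℝ^d`, with `E|Z|² < ∞`, and suppose there is
`c > 0` such that almost surely `vᵀ E[Z Zᵀ | X] v ≥ c |v|²` for all `v ∈ ℝ^d`.  Let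
`f₁, …, f_d : ℝ → ℝ` be measurable with `E[f_j(X_j)²] < ∞` for each `j` and
`E[(Σ_j f_j(X_j) Z_j)²] < ∞`.  Then
`E[(Σ_j f_j(X_j) Z_j)²] ≥ c Σ_j E[f_j(X_j)²]`; in particular, if
`Σ_j f_j(X_j) Z_j = 0` almost surely, then `f_j(X_j) = 0` almost surely for every `j`. -/
theorem no_concurvity_second_moment_bound
    (d : ℕ) (hd : 1 ≤ d)
    (Ω : Type*) [MeasurableSpace Ω] (μ : MeasureTheory.Measure Ω)
    [IsProbabilityMeasure μ]
    (X Z : Ω → (Fin d → ℝ)) (hX : Measurable X) (hZ : Measurable Z)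
    (hZ2 : Integrable (fun ω => ∑ j, (Z ω j) ^ 2) μ)
    (c : ℝ) (hc : 0 < c)
    (hcond : ∀ᵐ ω ∂μ, ∀ v : Fin d → ℝ,
      c * ∑ k, (v k) ^ 2 ≤
        ∑ j, ∑ k, v j * v k *
          ((μ[(fun ω' => Z ω' j * Z ω' k) |
            MeasurableSpace.comap X MeasurableSpace.pi]) ω))
    (f : Fin d → ℝ → ℝ) (hf : ∀ j, Measurable (f j))
    (hfX2 : ∀ j, Integrable (fun ω => (f j (X ω j)) ^ 2) μ)
    (hsq : Integrable (fun ω => (∑ j, f j (X ω j) * Z ω j) ^ 2) μ) :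
    c * ∑ j, ∫ ω, (f j (X ω j)) ^ 2 ∂μ ≤
      ∫ ω, (∑ j, f j (X ω j) * Z ω j) ^ 2 ∂μ ∧
    ((∀ᵐ ω ∂μ, ∑ j, f j (X ω j) * Z ω j = 0) →
      ∀ j, ∀ᵐ ω ∂μ, f j (X ω j) = 0) := by
  rename_i mΩ hprob
  set m : MeasurableSpace Ω := MeasurableSpace.comap X MeasurableSpace.pi with hm_def
  have hm : m ≤ mΩ := hX.comap_le
  haveI : SigmaFinite (μ.trim hm) := by infer_instance
  -- g j ω = f j (X ω j)
  set g : Fin d → Ω → ℝ := fun j ω => f j (X ω j) with hg_def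
  have hgm : ∀ j, Measurable[m] (g j) := by
    intro j
    exact (hf j).comp ((measurable_pi_apply j).comp (comap_measurable X))
  have hg_meas : ∀ j, Measurable[mΩ] (g j) := fun j => (hgm j).mono hm le_rfl
  -- Z products integrable
  have hZZ : ∀ j k, Integrable (fun ω => Z ω j * Z ω k) μ := by
    intro j k
    have hmeas : AEStronglyMeasurable[mΩ] (fun ω => Z ω j * Z ω k) μ :=
      (((measurable_pi_apply j).comp hZ).mul
        ((measurable_pi_apply k).comp hZ)).aestronglyMeasurable
    refine Integrable.mono' hZ2 hmeas ?_
    filter_upwards with ω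
    have h1 : (Z ω j)^2 ≤ ∑ l, (Z ω l)^2 :=
      Finset.single_le_sum (f := fun l => (Z ω l)^2) (fun l _ => sq_nonneg _)
        (Finset.mem_univ j)
    have h2 : (Z ω k)^2 ≤ ∑ l, (Z ω l)^2 :=
      Finset.single_le_sum (f := fun l => (Z ω l)^2) (fun l _ => sq_nonneg _)
        (Finset.mem_univ k)
    rw [Real.norm_eq_abs, abs_mul]
    nlinarith [sq_abs (Z ω j), sq_abs (Z ω k), abs_nonneg (Z ω j), abs_nonneg (Z ω k),
      sq_nonneg (|Z ω j| - |Z ω k|)]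
  -- the truncation sets
  set A : ℕ → Set Ω := fun M => {ω | ∑ j, (g j ω)^2 ≤ (M : ℝ)} with hA_def
  have hA_m : ∀ M, MeasurableSet[m] (A M) := by
    intro M
    exact measurableSet_le (Finset.measurable_sum _ fun j _ => (hgm j).pow_const 2)
      measurable_const
  have hA_meas : ∀ M, MeasurableSet[mΩ] (A M) := fun M => hm _ (hA_m M)
  -- truncated functions
  set h : ℕ → Fin d → Ω → ℝ := fun M j => (A M).indicator (g j) with hh_def
  have hhm : ∀ M j, StronglyMeasurable[m] (h M j) :=
    fun M j => ((hgm j).stronglyMeasurable).indicator (hA_m M)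
  -- bound on h products: |h M j ω * h M k ω| ≤ M
  have hh_bdd : ∀ M j k ω, |h M j ω * h M k ω| ≤ (M : ℝ) := by
    intro M j k ω
    simp only [hh_def, Set.indicator_apply]
    by_cases hω : ω ∈ A M
    · simp only [hω, if_pos]
      have h1 : (g j ω)^2 ≤ (M : ℝ) := le_trans
        (Finset.single_le_sum (f := fun l => (g l ω)^2) (fun l _ => sq_nonneg _)
          (Finset.mem_univ j)) hω
      have h2 : (g k ω)^2 ≤ (M : ℝ) := le_trans
        (Finset.single_le_sum (f := fun l => (g l ω)^2) (fun l _ => sq_nonneg _)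
          (Finset.mem_univ k)) hω
      rw [abs_mul]
      nlinarith [sq_abs (g j ω), sq_abs (g k ω), abs_nonneg (g j ω), abs_nonneg (g k ω),
        sq_nonneg (|g j ω| - |g k ω|)]
    · simp only [hω, if_neg, not_false_iff, zero_mul, abs_zero]
      positivity
  -- h-products times Z-products are integrable
  have hhZZ : ∀ M j k, Integrable (fun ω => h M j ω * h M k ω * (Z ω j * Z ω k)) μ := by
    intro M j k
    have hmZ : Measurable[mΩ] (fun ω => Z ω j * Z ω k) :=
      ((measurable_pi_apply j).comp hZ).mul ((measurable_pi_apply k).comp hZ)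
    have hmeas : AEStronglyMeasurable[mΩ] (fun ω => h M j ω * h M k ω * (Z ω j * Z ω k)) μ := by
      refine Measurable.aestronglyMeasurable ?_
      exact ((((hhm M j).measurable.mono hm le_rfl)).mul
        ((hhm M k).measurable.mono hm le_rfl)).mul hmZ
    refine Integrable.mono' (((hZZ j k).abs).const_mul (M : ℝ)) hmeas ?_
    filter_upwards with ω
    rw [Real.norm_eq_abs, abs_mul]
    exact mul_le_mul_of_nonneg_right (hh_bdd M j k ω) (abs_nonneg _)
  -- the truncated sum T M
  set T : ℕ → Ω → ℝ := fun M ω => ∑ j, h M j ω * Z ω j with hT_def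
  -- T M ^2 = indicator (A M) S^2
  have hT_sq : ∀ M ω, (T M ω)^2 = (A M).indicator (fun ω => (∑ j, g j ω * Z ω j)^2) ω := by
    intro M ω
    simp only [hT_def, hh_def, Set.indicator_apply]
    by_cases hω : ω ∈ A M
    · simp [hω]
    · simp [hω]
  have hT2_int : ∀ M, Integrable (fun ω => (T M ω)^2) μ := by
    intro M
    have := aux_indicator_integrable hsq (hA_meas M)
    exact this.congr (by filter_upwards with ω using (hT_sq M ω).symm)
  -- T² as double sum
  have hT2_sum : ∀ M ω, (T M ω)^2 =
      ∑ p : Fin d × Fin d, h M p.1 ω * h M p.2 ω * (Z ω p.1 * Z ω p.2) := by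
    intro M ω
    rw [Fintype.sum_prod_type, sq, Finset.sum_mul_sum]
    exact Finset.sum_congr rfl fun j _ => Finset.sum_congr rfl fun k _ => by ring
  -- conditional expectation of T²
  have hcond_T2 : ∀ M, μ[(fun ω => (T M ω)^2) | m] =ᵐ[μ]
      fun ω => ∑ p : Fin d × Fin d, h M p.1 ω * h M p.2 ω *
        (μ[(fun ω' => Z ω' p.1 * Z ω' p.2) | m]) ω := by
    intro M
    have e1 : (fun ω => (T M ω)^2) =
        ∑ p : Fin d × Fin d, (fun ω => h M p.1 ω * h M p.2 ω * (Z ω p.1 * Z ω p.2)) := by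
      funext ω
      rw [hT2_sum M ω]
      simp
    rw [e1]
    refine (condExp_finset_sum (fun p _ => hhZZ M p.1 p.2) m).trans ?_
    have e2 : ∀ p : Fin d × Fin d,
        μ[(fun ω => h M p.1 ω * h M p.2 ω * (Z ω p.1 * Z ω p.2)) | m] =ᵐ[μ]
        fun ω => h M p.1 ω * h M p.2 ω * (μ[(fun ω' => Z ω' p.1 * Z ω' p.2) | m]) ω := by
      intro p
      have := condExp_mul_of_stronglyMeasurable_left (m := m) (μ := μ)
        (f := fun ω => h M p.1 ω * h M p.2 ω) (g := fun ω => Z ω p.1 * Z ω p.2)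
        ((hhm M p.1).mul (hhm M p.2)) (hhZZ M p.1 p.2) (hZZ p.1 p.2)
      exact this
    have := eventuallyEq_sum (s := (Finset.univ : Finset (Fin d × Fin d)))
      (fun p _ => e2 p)
    refine this.trans ?_
    filter_upwards with ω
    simp
  -- integrability of h² terms
  have hh2_eq : ∀ M j ω, (h M j ω)^2 = (A M).indicator (fun ω => (g j ω)^2) ω := by
    intro M j ω
    simp only [hh_def, Set.indicator_apply]
    by_cases hω : ω ∈ A M <;> simp [hω]
  have hh2_int : ∀ M j, Integrable (fun ω => (h M j ω)^2) μ := by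
    intro M j
    exact (aux_indicator_integrable (hfX2 j) (hA_meas M)).congr
      (by filter_upwards with ω using (hh2_eq M j ω).symm)
  -- pointwise lower bound ae
  have hlow : ∀ M, ∀ᵐ ω ∂μ, c * ∑ j, (h M j ω)^2 ≤
      ∑ p : Fin d × Fin d, h M p.1 ω * h M p.2 ω *
        (μ[(fun ω' => Z ω' p.1 * Z ω' p.2) | m]) ω := by
    intro M
    filter_upwards [hcond] with ω hω
    have := hω (fun j => h M j ω)
    rw [Fintype.sum_prod_type]
    exact this
  -- key inequality for each M
  have key : ∀ M : ℕ, c * ∑ j, ∫ ω, (h M j ω)^2 ∂μ ≤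
      ∫ ω, (∑ j, g j ω * Z ω j)^2 ∂μ := by
    intro M
    have low_int : Integrable (fun ω => c * ∑ j, (h M j ω)^2) μ :=
      (integrable_finset_sum _ fun j _ => hh2_int M j).const_mul c
    have step1 : ∫ ω, (c * ∑ j, (h M j ω)^2) ∂μ ≤
        ∫ ω, (μ[(fun ω' => (T M ω')^2) | m]) ω ∂μ := by
      refine integral_mono_ae low_int integrable_condExp ?_
      filter_upwards [hlow M, hcond_T2 M] with ω h1 h2
      rw [h2]
      exact h1
    have step2 : ∫ ω, (μ[(fun ω' => (T M ω')^2) | m]) ω ∂μ = ∫ ω, (T M ω)^2 ∂μ :=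
      integral_condExp hm
    have step3 : ∫ ω, (T M ω)^2 ∂μ ≤ ∫ ω, (∑ j, g j ω * Z ω j)^2 ∂μ := by
      refine integral_mono (hT2_int M) hsq ?_
      intro ω
      dsimp only
      rw [hT_sq M ω]
      exact Set.indicator_le_self' (fun x _ => sq_nonneg _) ω
    have e : ∫ ω, (c * ∑ j, (h M j ω)^2) ∂μ = c * ∑ j, ∫ ω, (h M j ω)^2 ∂μ := by
      rw [integral_const_mul, integral_finset_sum _ fun j _ => hh2_int M j]
    linarith [step1, step3, e, step2]
  -- limit as M → ∞
  have hlim : ∀ j, Filter.Tendsto (fun M : ℕ => ∫ ω, (h M j ω)^2 ∂μ)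
      Filter.atTop (nhds (∫ ω, (g j ω)^2 ∂μ)) := by
    intro j
    refine tendsto_integral_of_dominated_convergence (fun ω => (g j ω)^2)
      (fun M => ?_) (hfX2 j) (fun M => ?_) ?_
    · exact (((hhm M j).measurable.mono hm le_rfl).pow_const 2).aestronglyMeasurable
    · filter_upwards with ω
      rw [Real.norm_eq_abs, abs_of_nonneg (sq_nonneg _), hh2_eq M j ω]
      exact Set.indicator_le_self' (fun x _ => sq_nonneg _) ω
    · filter_upwards with ω
      refine Filter.Tendsto.congr' ?_ tendsto_const_nhds
      rw [Filter.EventuallyEq, Filter.eventually_atTop]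
      refine ⟨⌈∑ l, (g l ω)^2⌉₊, fun M hM => ?_⟩
      have hωA : ω ∈ A M := by
        simp only [hA_def, Set.mem_setOf_eq]
        exact le_trans (Nat.le_ceil _) (Nat.cast_le.mpr hM)
      rw [hh2_eq M j ω, Set.indicator_of_mem hωA]
  have main : c * ∑ j, ∫ ω, (g j ω)^2 ∂μ ≤ ∫ ω, (∑ j, g j ω * Z ω j)^2 ∂μ := by
    have htend : Filter.Tendsto (fun M : ℕ => c * ∑ j, ∫ ω, (h M j ω)^2 ∂μ)
        Filter.atTop (nhds (c * ∑ j, ∫ ω, (g j ω)^2 ∂μ)) :=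
      (tendsto_finset_sum _ fun j _ => hlim j).const_mul c
    exact le_of_tendsto htend (Filter.Eventually.of_forall key)
  refine ⟨main, ?_⟩
  intro hS0 j
  have hS2zero : ∫ ω, (∑ j, g j ω * Z ω j)^2 ∂μ = 0 := by
    rw [integral_eq_zero_iff_of_nonneg (fun ω => sq_nonneg _) hsq] at *
    · filter_upwards [hS0] with ω hω
      simp [hg_def] at hω ⊢
      simp [hω]
  have hsum0 : ∑ j, ∫ ω, (g j ω)^2 ∂μ = 0 := by
    have h1 : c * ∑ j, ∫ ω, (g j ω)^2 ∂μ ≤ 0 := by rw [← hS2zero]; exact main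
    have h2 : 0 ≤ ∑ j, ∫ ω, (g j ω)^2 ∂μ :=
      Finset.sum_nonneg fun j _ => integral_nonneg fun ω => sq_nonneg _
    nlinarith
  have hj0 : ∫ ω, (g j ω)^2 ∂μ = 0 := by
    exact (Finset.sum_eq_zero_iff_of_nonneg
      (f := fun j : Fin d => ∫ ω, (g j ω)^2 ∂μ)
      (fun (j : Fin d) (_ : j ∈ Finset.univ) =>
        integral_nonneg fun ω => sq_nonneg (g j ω))).mp hsum0 j (Finset.mem_univ j)
  have := (integral_eq_zero_iff_of_nonneg (fun ω => sq_nonneg (g j ω)) (hfX2 j)).mp hj0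
  filter_upwards [this] with ω hω
  exact pow_eq_zero_iff (by norm_num) |>.mp hω
end
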